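/- arXiv:1705.02188 — 2 statements merged into one kernel-verified Lean document; each statement's English description precedes it below -/
import Mathlib

section
/- Let A and B be n×n complex positive definite matrices, and let Φ be a normalized positive linear map from n×n complex matrices to m×m complex matrices such that Φ(A) and Φ(B) are positive definite. Then for every p ∈ (0,1], with r := min{p, 1−p} and R := max{p, 1−p}, one has (2r/p)·(Φ(A ∇ B) − Φ(A) # Φ(B)) + T_p(Φ(A)|Φ(B)) ≤ Φ(B − A) ≤ (2R/p)·(Φ(A ∇ B) − Φ(A # B)) + Φ(T_p(A|B)) in the Loewner order. -/
open Matrix ComplexOrder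

/-- Real power of a (Hermitian) complex matrix via the continuous functional calculus,
corresponding to `Matrix.PosDef.rpow` on positive definite matrices. -/
noncomputable def mrpow {n : Type*} [Fintype n] [DecidableEq n]
    (A : Matrix n n ℂ) (r : ℝ) : Matrix n n ℂ :=
  cfc (fun t : ℝ => t ^ r) A

/-- The Loewner order: `loe X Y` means `Y - X` is positive semidefinite. -/
def loe {n : Type*} [Fintype n] (X Y : Matrix n n ℂ) : Prop :=
  (Y - X).PosSemidef

/-- `A ♮ᵣ B = A^{1/2} (A^{-1/2} B A^{-1/2})^r A^{1/2}`; for `r ∈ [0,1]` this is the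
weighted geometric mean `A #ᵣ B`. -/
noncomputable def natu {n : Type*} [Fintype n] [DecidableEq n]
    (A B : Matrix n n ℂ) (r : ℝ) : Matrix n n ℂ :=
  mrpow A (1 / 2) * mrpow (mrpow A (-(1 / 2)) * B * mrpow A (-(1 / 2))) r * mrpow A (1 / 2)

/-- The Tsallis relative operator entropy `T_p(A|B) = (A #_p B - A) / p`. -/
noncomputable def TsallisEntropy {n : Type*} [Fintype n] [DecidableEq n]
    (A B : Matrix n n ℂ) (p : ℝ) : Matrix n n ℂ :=
  (1 / p : ℝ) • (natu A B p - A)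

/-! ### Scalar inequalities (Kittaneh–Manasrah type) -/

private lemma km_low {p z : ℝ} (hp0 : 0 < p) (hp1 : p ≤ 1) (hz : 0 ≤ z) :
    min p (1-p) * (z-1)^2 ≤ 1 - p + p*z^2 - z^(2*p) := by
  rcases eq_or_lt_of_le hz with h0 | hz
  · rw [← h0, Real.zero_rpow (by positivity)]
    have := min_le_right p (1-p)
    nlinarith
  · rcases le_total p (1/2) with hp | hp
    · have h := Real.geom_mean_le_arith_mean2_weighted
        (w₁ := 1-2*p) (w₂ := 2*p) (p₁ := 1) (p₂ := z)
        (by linarith) (by linarith) zero_le_one hz.le (by ring)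
      rw [Real.one_rpow, one_mul] at h
      rw [min_eq_left (by linarith)]
      nlinarith [h]
    · have h := Real.geom_mean_le_arith_mean2_weighted
        (w₁ := 2*p-1) (w₂ := 2-2*p) (p₁ := z^2) (p₂ := z)
        (by linarith) (by linarith) (sq_nonneg z) hz.le (by ring)
      have key : (z^2)^(2*p-1) * z^(2-2*p) = z^(2*p) := by
        rw [← Real.rpow_natCast z 2, ← Real.rpow_mul hz.le, ← Real.rpow_add hz]
        congr 1
        push_cast; ring
      rw [key] at h
      rw [min_eq_right (by linarith)]
      nlinarith [h]

private lemma km_high {p z : ℝ} (hp0 : 0 < p) (hp1 : p ≤ 1) (hz : 0 ≤ z) :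
    1 - p + p*z^2 - z^(2*p) ≤ max p (1-p) * (z-1)^2 := by
  rcases eq_or_lt_of_le hz with h0 | hz
  · rw [← h0, Real.zero_rpow (by positivity)]
    have := le_max_right p (1-p)
    nlinarith
  · rcases le_total p (1/2) with hp | hp
    · have h2p : (0:ℝ) < 2-2*p := by linarith
      have h := Real.geom_mean_le_arith_mean2_weighted
        (w₁ := (1-2*p)/(2-2*p)) (w₂ := 1/(2-2*p)) (p₁ := z^2) (p₂ := z^(2*p))
        (div_nonneg (by linarith) h2p.le) (by positivity)
        (sq_nonneg z) (Real.rpow_nonneg hz.le _) (by have hinv := inv_mul_cancel₀ h2p.ne'; simp only [div_eq_mul_inv, one_mul]; linear_combination hinv)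
      have key : (z^2)^((1-2*p)/(2-2*p)) * (z^(2*p))^(1/(2-2*p)) = z := by
        rw [← Real.rpow_natCast z 2, ← Real.rpow_mul hz.le, ← Real.rpow_mul hz.le,
          ← Real.rpow_add hz]
        rw [show ((2:ℕ):ℝ)*((1-2*p)/(2-2*p)) + (2*p)*(1/(2-2*p)) = 1 by
          push_cast; have hinv := inv_mul_cancel₀ h2p.ne'; simp only [div_eq_mul_inv, one_mul]; linear_combination hinv]
        exact Real.rpow_one z
      rw [key] at h
      have h' := mul_le_mul_of_nonneg_left h h2p.le
      have e1 : (2-2*p)*((1-2*p)/(2-2*p)*z^2 + 1/(2-2*p)*z^(2*p))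
          = (1-2*p)*z^2 + z^(2*p) := by
        have hinv := inv_mul_cancel₀ h2p.ne'; simp only [div_eq_mul_inv, one_mul]; linear_combination ((1-2*p)*z^2 + z^(2*p)) * hinv
      rw [e1] at h'
      rw [max_eq_right (by linarith)]
      nlinarith [h']
    · have h2p : (0:ℝ) < 2*p := by linarith
      have h := Real.geom_mean_le_arith_mean2_weighted
        (w₁ := 1/(2*p)) (w₂ := 1-1/(2*p)) (p₁ := z^(2*p)) (p₂ := 1)
        (by positivity) (by rw [sub_nonneg, div_le_one h2p]; linarith)
        (Real.rpow_nonneg hz.le _) zero_le_one (by field_simp; try ring)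
      rw [Real.one_rpow, mul_one, mul_one] at h
      have key : (z^(2*p))^(1/(2*p)) = z := by
        rw [← Real.rpow_mul hz.le, show (2*p)*(1/(2*p)) = 1 by field_simp]
        exact Real.rpow_one z
      rw [key] at h
      have h' := mul_le_mul_of_nonneg_left h h2p.le
      have e1 : (2*p)*(1/(2*p)*z^(2*p) + (1-1/(2*p))) = z^(2*p) + (2*p-1) := by
        field_simp
      rw [e1] at h'
      rw [max_eq_left (by linarith)]
      nlinarith [h']

private lemma scalar_bridge {p x : ℝ} (hp0 : 0 < p) (hp1 : p ≤ 1) (hx : 0 ≤ x) :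
    2*min p (1-p)/p * ((1+x)/2 - x^(1/2:ℝ)) + (1/p)*(x^p - 1) ≤ x - 1 ∧
    x - 1 ≤ 2*max p (1-p)/p * ((1+x)/2 - x^(1/2:ℝ)) + (1/p)*(x^p - 1) := by
  set z := x^(1/2:ℝ) with hzdef
  have hz : 0 ≤ z := Real.rpow_nonneg hx _
  have hx2 : x = z^2 := by
    rw [hzdef, ← Real.rpow_natCast (x^(1/2:ℝ)) 2, ← Real.rpow_mul hx]
    norm_num
  have hxp : x^p = z^(2*p) := by
    rw [hzdef, ← Real.rpow_mul hx, show (1/2:ℝ)*(2*p) = p by ring]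
  have l := km_low hp0 hp1 hz
  have u := km_high hp0 hp1 hz
  rw [hxp, hx2]
  constructor
  · rw [← sub_nonneg,
      show (z^2 - 1) - (2*min p (1-p)/p * ((1+z^2)/2 - z) + (1/p)*(z^(2*p) - 1))
        = (1/p) * ((1 - p + p*z^2 - z^(2*p)) - min p (1-p)*(z-1)^2) by
          field_simp; ring]
    exact mul_nonneg (by positivity) (by linarith)
  · rw [← sub_nonneg,
      show (2*max p (1-p)/p * ((1+z^2)/2 - z) + (1/p)*(z^(2*p) - 1)) - (z^2 - 1)
        = (1/p) * (max p (1-p)*(z-1)^2 - (1 - p + p*z^2 - z^(2*p))) by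
          field_simp; ring]
    exact mul_nonneg (by positivity) (by linarith)

/-! ### Matrix functional-calculus helpers -/

section MatrixHelpers
variable {n : Type*} [Fintype n] [DecidableEq n]

private lemma matCont (X : Matrix n n ℂ) (f : ℝ → ℝ) : ContinuousOn f (spectrum ℝ X) := by
  rw [continuousOn_iff_continuous_restrict]
  have : Finite (spectrum ℝ X) := X.finite_real_spectrum
  fun_prop

private lemma matHerm (X : Matrix n n ℂ) (f : ℝ → ℝ) : (cfc f X).IsHermitian :=
  (cfc_predicate f X : IsSelfAdjoint _)

private lemma specNonneg {X : Matrix n n ℂ} (hX : X.PosSemidef) :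
    ∀ x ∈ spectrum ℝ X, 0 ≤ x := by
  intro x hx
  rw [hX.isHermitian.spectrum_real_eq_range_eigenvalues] at hx
  obtain ⟨i, rfl⟩ := hx
  exact hX.eigenvalues_nonneg i

private lemma specPos {X : Matrix n n ℂ} (hX : X.PosDef) :
    ∀ x ∈ spectrum ℝ X, 0 < x := by
  intro x hx
  rw [hX.isHermitian.spectrum_real_eq_range_eigenvalues] at hx
  obtain ⟨i, rfl⟩ := hx
  exact hX.eigenvalues_pos i

private lemma cfcPsd {X : Matrix n n ℂ} {f : ℝ → ℝ}
    (h0 : ∀ x ∈ spectrum ℝ X, 0 ≤ f x) : (cfc f X).PosSemidef := by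
  have h1 : cfc f X = cfc (fun x => Real.sqrt (f x) * Real.sqrt (f x)) X :=
    cfc_congr fun x hx => (Real.mul_self_sqrt (h0 x hx)).symm
  rw [h1, cfc_mul _ _ X (matCont X _) (matCont X _)]
  have hh := matHerm X (fun x => Real.sqrt (f x))
  have := Matrix.posSemidef_conjTranspose_mul_self (cfc (fun x => Real.sqrt (f x)) X)
  rwa [hh.eq] at this

private lemma conjPsd {S M : Matrix n n ℂ} (hS : S.IsHermitian) (hM : M.PosSemidef) :
    (S * M * S).PosSemidef := by
  have := hM.conjTranspose_mul_mul_same S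
  rwa [hS.eq] at this

variable {A B : Matrix n n ℂ}

private lemma mrpow_mul_mrpow (hA : A.PosDef) (r s : ℝ) :
    mrpow A r * mrpow A s = mrpow A (r + s) := by
  unfold mrpow
  rw [← cfc_mul _ _ A (matCont A _) (matCont A _)]
  exact cfc_congr fun x hx => (Real.rpow_add (specPos hA x hx) r s).symm

private lemma mrpow_half_mul_neg (hA : A.PosDef) : mrpow A (1/2) * mrpow A (-(1/2)) = 1 := by
  rw [mrpow_mul_mrpow hA]
  have hsa : IsSelfAdjoint A := hA.1
  calc mrpow A (1/2 + -(1/2)) = cfc (fun _ : ℝ => (1:ℝ)) A := by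
        unfold mrpow
        exact cfc_congr fun x _ => by norm_num
    _ = 1 := cfc_const_one ℝ A

private lemma mrpow_neg_mul_half (hA : A.PosDef) : mrpow A (-(1/2)) * mrpow A (1/2) = 1 := by
  rw [mrpow_mul_mrpow hA]
  have hsa : IsSelfAdjoint A := hA.1
  calc mrpow A (-(1/2) + 1/2) = cfc (fun _ : ℝ => (1:ℝ)) A := by
        unfold mrpow
        exact cfc_congr fun x _ => by norm_num
    _ = 1 := cfc_const_one ℝ A

private lemma mrpow_half_sq (hA : A.PosDef) : mrpow A (1/2) * mrpow A (1/2) = A := by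
  rw [mrpow_mul_mrpow hA]
  have hsa : IsSelfAdjoint A := hA.1
  calc mrpow A (1/2 + 1/2) = cfc (id : ℝ → ℝ) A := by
        unfold mrpow
        exact cfc_congr fun x hx => by norm_num [Real.rpow_one]
    _ = A := cfc_id ℝ A

private lemma X_psd (hA : A.PosDef) (hB : B.PosDef) :
    (mrpow A (-(1/2)) * B * mrpow A (-(1/2))).PosSemidef := by
  have h := hB.posSemidef.conjTranspose_mul_mul_same (mrpow A (-(1/2)))
  have hsi : (mrpow A (-(1/2))).IsHermitian := matHerm A _
  rwa [hsi.eq] at h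

private lemma sxs (hA : A.PosDef) (hB : B.PosDef) :
    mrpow A (1/2) * (mrpow A (-(1/2)) * B * mrpow A (-(1/2))) * mrpow A (1/2) = B := by
  have h1 := mrpow_half_mul_neg hA
  have h2 := mrpow_neg_mul_half hA
  calc mrpow A (1/2) * (mrpow A (-(1/2)) * B * mrpow A (-(1/2))) * mrpow A (1/2)
      = (mrpow A (1/2) * mrpow A (-(1/2))) * B * (mrpow A (-(1/2)) * mrpow A (1/2)) := by
        simp only [Matrix.mul_assoc]
    _ = B := by rw [h1, h2, Matrix.one_mul, Matrix.mul_one]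

private lemma core_eq (hA : A.PosDef) (hB : B.PosDef) (p c : ℝ) :
    (B - A) - (c • ((1/2:ℝ) • (A + B) - natu A B (1/2)) + TsallisEntropy A B p)
      = mrpow A (1/2) *
        cfc (fun x : ℝ => (x - 1) - (c * ((1+x)/2 - x^(1/2:ℝ)) + (1/p) * (x^p - 1)))
          (mrpow A (-(1/2)) * B * mrpow A (-(1/2))) * mrpow A (1/2) := by
  set S := mrpow A (1/2) with hSdef
  set Si := mrpow A (-(1/2)) with hSidef
  set X := Si * B * Si with hXdef
  have hXsa : IsSelfAdjoint X := (X_psd hA hB).1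
  have hc := matCont X
  have h1 : cfc (fun x : ℝ => x - 1) X = X - 1 := by
    calc cfc (fun x : ℝ => x - 1) X = cfc (id : ℝ → ℝ) X - cfc (fun _ : ℝ => (1:ℝ)) X :=
          cfc_sub _ _ X (hc _) (hc _)
      _ = X - 1 := by rw [cfc_id ℝ X, cfc_const_one ℝ X]
  have h2 : cfc (fun x : ℝ => (1+x)/2 - x^(1/2:ℝ)) X
      = (1/2:ℝ) • (1 + X) - cfc (fun x : ℝ => x^(1/2:ℝ)) X := by
    have e0 : cfc (fun x : ℝ => (1+x)/2) X = (1/2:ℝ) • (1 + X) := by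
      calc cfc (fun x : ℝ => (1+x)/2) X
          = cfc (fun x : ℝ => (1/2:ℝ) • ((fun y : ℝ => 1+y) x)) X :=
            cfc_congr fun x _ => by simp [smul_eq_mul]; ring
        _ = (1/2:ℝ) • cfc (fun y : ℝ => 1+y) X := cfc_smul (1/2:ℝ) _ X (hc _)
        _ = (1/2:ℝ) • (1 + X) := by
            congr 1
            calc cfc (fun y : ℝ => 1+y) X
                = cfc (fun _ : ℝ => (1:ℝ)) X + cfc (id : ℝ → ℝ) X := cfc_add X _ _ (hc _) (hc _)
              _ = 1 + X := by rw [cfc_id ℝ X, cfc_const_one ℝ X]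
    calc cfc (fun x : ℝ => (1+x)/2 - x^(1/2:ℝ)) X
        = cfc (fun x : ℝ => (1+x)/2) X - cfc (fun x : ℝ => x^(1/2:ℝ)) X :=
          cfc_sub _ _ X (hc _) (hc _)
      _ = _ := by rw [e0]
  have h3 : cfc (fun x : ℝ => (1/p) * (x^p - 1)) X
      = (1/p:ℝ) • (cfc (fun x : ℝ => x^p) X - 1) := by
    calc cfc (fun x : ℝ => (1/p) * (x^p - 1)) X
        = cfc (fun x : ℝ => (1/p:ℝ) • ((fun y : ℝ => y^p - 1) x)) X :=
          cfc_congr fun x _ => by simp [smul_eq_mul]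
      _ = (1/p:ℝ) • cfc (fun y : ℝ => y^p - 1) X := cfc_smul (1/p:ℝ) _ X (hc _)
      _ = _ := by
          congr 1
          calc cfc (fun y : ℝ => y^p - 1) X
              = cfc (fun y : ℝ => y^p) X - cfc (fun _ : ℝ => (1:ℝ)) X :=
                cfc_sub _ _ X (hc _) (hc _)
            _ = _ := by rw [cfc_const_one ℝ X]
  have h4 : cfc (fun x : ℝ => c * ((1+x)/2 - x^(1/2:ℝ))) X
      = c • ((1/2:ℝ) • (1 + X) - cfc (fun x : ℝ => x^(1/2:ℝ)) X) := by
    calc cfc (fun x : ℝ => c * ((1+x)/2 - x^(1/2:ℝ))) X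
        = cfc (fun x : ℝ => c • ((fun y : ℝ => (1+y)/2 - y^(1/2:ℝ)) x)) X :=
          cfc_congr fun x _ => by simp [smul_eq_mul]
      _ = c • cfc (fun y : ℝ => (1+y)/2 - y^(1/2:ℝ)) X := cfc_smul c _ X (hc _)
      _ = _ := by rw [h2]
  have e1 : cfc (fun x : ℝ => (x - 1) - (c * ((1+x)/2 - x^(1/2:ℝ)) + (1/p) * (x^p - 1))) X
      = (X - 1) - (c • ((1/2:ℝ) • (1 + X) - cfc (fun x : ℝ => x^(1/2:ℝ)) X)
          + (1/p:ℝ) • (cfc (fun x : ℝ => x^p) X - 1)) := by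
    calc cfc (fun x : ℝ => (x - 1) - (c * ((1+x)/2 - x^(1/2:ℝ)) + (1/p) * (x^p - 1))) X
        = cfc (fun x : ℝ => x - 1) X
            - cfc (fun x : ℝ => c * ((1+x)/2 - x^(1/2:ℝ)) + (1/p) * (x^p - 1)) X :=
          cfc_sub _ _ X (hc _) (hc _)
      _ = cfc (fun x : ℝ => x - 1) X
            - (cfc (fun x : ℝ => c * ((1+x)/2 - x^(1/2:ℝ))) X
              + cfc (fun x : ℝ => (1/p) * (x^p - 1)) X) := by
          rw [cfc_add X _ _ (hc _) (hc _)]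
      _ = _ := by rw [h1, h3, h4]
  rw [e1]
  have hB' : B = S * X * S := (sxs hA hB).symm
  have hA' : A = S * (1:Matrix n n ℂ) * S := by
    rw [Matrix.mul_one, hSdef, mrpow_half_sq hA]
  have hT : TsallisEntropy A B p = (1/p:ℝ) • (S * cfc (fun x : ℝ => x^p) X * S - A) := rfl
  have hNh : natu A B (1/2) = S * cfc (fun x : ℝ => x^(1/2:ℝ)) X * S := rfl
  rw [hT, hNh]
  rw [hB']
  nth_rewrite 1 [hA']
  nth_rewrite 1 [hA']
  nth_rewrite 1 [hA']
  simp only [Matrix.mul_sub, Matrix.sub_mul, Matrix.mul_add, Matrix.add_mul,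
    Matrix.mul_smul, Matrix.smul_mul, Matrix.mul_one, Matrix.mul_assoc]

private lemma core_lower (hA : A.PosDef) (hB : B.PosDef) {p : ℝ}
    (hp0 : 0 < p) (hp1 : p ≤ 1) :
    loe ((2 * min p (1 - p) / p) • ((1/2:ℝ) • (A + B) - natu A B (1/2))
        + TsallisEntropy A B p) (B - A) := by
  unfold loe
  rw [core_eq hA hB p (2 * min p (1 - p) / p)]
  refine conjPsd (matHerm A _) (cfcPsd fun x hx => ?_)
  have hx0 : 0 ≤ x := specNonneg (X_psd hA hB) x hx
  have h := (scalar_bridge hp0 hp1 hx0).1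
  have : 2 * min p (1-p) / p = 2 * min p (1 - p) / p := by norm_num
  linarith [h]

private lemma core_upper (hA : A.PosDef) (hB : B.PosDef) {p : ℝ}
    (hp0 : 0 < p) (hp1 : p ≤ 1) :
    loe (B - A) ((2 * max p (1 - p) / p) • ((1/2:ℝ) • (A + B) - natu A B (1/2))
        + TsallisEntropy A B p) := by
  unfold loe
  have h := core_eq hA hB p (2 * max p (1 - p) / p)
  have hneg : ((2 * max p (1 - p) / p) • ((1/2:ℝ) • (A + B) - natu A B (1/2))
        + TsallisEntropy A B p) - (B - A)
      = mrpow A (1/2) *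
        cfc (fun x : ℝ => -((x - 1) - ((2 * max p (1 - p) / p) * ((1+x)/2 - x^(1/2:ℝ))
            + (1/p) * (x^p - 1))))
          (mrpow A (-(1/2)) * B * mrpow A (-(1/2))) * mrpow A (1/2) := by
    rw [cfc_neg]
    rw [Matrix.mul_neg, Matrix.neg_mul, ← h]
    abel
  rw [hneg]
  refine conjPsd (matHerm A _) (cfcPsd fun x hx => ?_)
  have hx0 : 0 ≤ x := specNonneg (X_psd hA hB) x hx
  have h2 := (scalar_bridge hp0 hp1 hx0).2
  simp only [neg_sub]
  linarith [h2]

end MatrixHelpers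

theorem stmt16 {n m : Type*} [Fintype n] [DecidableEq n] [Fintype m] [DecidableEq m]
    {A B : Matrix n n ℂ} (hA : A.PosDef) (hB : B.PosDef)
    (Φ : Matrix n n ℂ →ₗ[ℂ] Matrix m m ℂ)
    (hΦpos : ∀ X : Matrix n n ℂ, X.PosSemidef → (Φ X).PosSemidef)
    (hΦ1 : Φ 1 = 1)
    (hΦA : (Φ A).PosDef) (hΦB : (Φ B).PosDef)
    {p : ℝ} (hp0 : 0 < p) (hp1 : p ≤ 1) :
    loe ((2 * min p (1 - p) / p) • (Φ ((1 / 2 : ℝ) • (A + B)) - natu (Φ A) (Φ B) (1 / 2))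
          + TsallisEntropy (Φ A) (Φ B) p)
      (Φ (B - A)) ∧
    loe (Φ (B - A))
      ((2 * max p (1 - p) / p) • (Φ ((1 / 2 : ℝ) • (A + B)) - Φ (natu A B (1 / 2)))
          + Φ (TsallisEntropy A B p)) := by
  have e1 : Φ ((1 / 2 : ℝ) • (A + B)) = (1/2:ℝ) • (Φ A + Φ B) := by
    rw [LinearMap.map_smul_of_tower, map_add]
  have e2 : Φ (B - A) = Φ B - Φ A := map_sub Φ B A
  constructor
  · have h := core_lower hΦA hΦB hp0 hp1
    rw [e1, e2]
    exact h
  · have h := core_upper hA hB hp0 hp1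
    unfold loe
    have hpsd := hΦpos _ h
    have e3 : Φ ((2 * max p (1 - p) / p) • ((1/2:ℝ) • (A + B) - natu A B (1/2))
          + TsallisEntropy A B p - (B - A))
        = (2 * max p (1 - p) / p) • (Φ ((1 / 2 : ℝ) • (A + B)) - Φ (natu A B (1 / 2)))
          + Φ (TsallisEntropy A B p) - Φ (B - A) := by
      rw [map_sub, map_add, LinearMap.map_smul_of_tower, map_sub]
    rwa [e3] at hpsd
end

section
/- Let A and B be n×n complex positive definite matrices with Tr[A] = Tr[B] = 1 (density matrices), and let p ∈ (0, 1/2]. Then (1−p)·Tr[T_{1/2}(A|B)] + (2p−1)·Tr[B − A] ≤ p·Tr[T_p(A|B)]. -/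
open Matrix ComplexOrder

section Aux
variable {n : Type*} [Fintype n] [DecidableEq n]

lemma contOn (f : ℝ → ℝ) (M : Matrix n n ℂ) : ContinuousOn f (spectrum ℝ M) :=
  (Matrix.finite_real_spectrum (A := M)).continuousOn f

lemma spectrum_pos {M : Matrix n n ℂ} (hM : M.PosDef) :
    ∀ x ∈ spectrum ℝ M, 0 < x := by
  rw [hM.1.spectrum_real_eq_range_eigenvalues]
  rintro x ⟨i, rfl⟩
  exact hM.eigenvalues_pos i

lemma mrpow_isHermitian (M : Matrix n n ℂ) (r : ℝ) : (mrpow M r).IsHermitian :=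
  cfc_predicate _ M

lemma mrpow_mul_mrpow_s19 {M : Matrix n n ℂ} (hM : M.PosDef) (r s : ℝ) :
    mrpow M r * mrpow M s = mrpow M (r + s) := by
  rw [mrpow, mrpow, mrpow, ← cfc_mul _ _ M (contOn _ M) (contOn _ M)]
  exact cfc_congr fun x hx => (Real.rpow_add (spectrum_pos hM x hx) r s).symm

lemma mrpow_zero {M : Matrix n n ℂ} (hM : M.PosDef) : mrpow M 0 = 1 := by
  rw [mrpow]
  calc cfc (fun t : ℝ => t ^ (0:ℝ)) M = cfc (fun _ : ℝ => (1:ℝ)) M :=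
        cfc_congr fun x _ => Real.rpow_zero x
    _ = 1 := cfc_const_one ℝ M hM.1

lemma mrpow_one {M : Matrix n n ℂ} (hM : M.PosDef) : mrpow M 1 = M := by
  rw [mrpow]
  calc cfc (fun t : ℝ => t ^ (1:ℝ)) M = cfc (fun t : ℝ => t) M :=
        cfc_congr fun x _ => Real.rpow_one x
    _ = M := cfc_id' ℝ M hM.1

lemma cfc_posSemidef {M : Matrix n n ℂ} (hM : M.IsHermitian) {f : ℝ → ℝ}
    (hf : ∀ i, 0 ≤ f (hM.eigenvalues i)) : (cfc f M).PosSemidef := by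
  rw [hM.cfc_eq, Matrix.IsHermitian.cfc]
  have hd : (Matrix.diagonal (RCLike.ofReal (K := ℂ) ∘ f ∘ hM.eigenvalues) : Matrix n n ℂ).PosSemidef :=
    Matrix.PosSemidef.diagonal fun i => by
      simpa using (RCLike.ofReal_nonneg (K := ℂ)).mpr (hf i)
  have := hd.mul_mul_conjTranspose_same (hM.eigenvectorUnitary : Matrix n n ℂ)
  simpa [Matrix.star_eq_conjTranspose] using this

lemma trace_re_nonneg' {M : Matrix n n ℂ} (hM : M.PosSemidef) : 0 ≤ M.trace.re := by
  have h : ∀ i, 0 ≤ (M i i).re := by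
    intro i
    have h2 := hM.dotProduct_mulVec_nonneg (Pi.single i 1)
    have h3 : star (Pi.single i 1 : n → ℂ) ⬝ᵥ (M *ᵥ Pi.single i 1) = M i i := by
      simp [dotProduct, Matrix.mulVec, Pi.single_apply]
    rw [h3] at h2
    exact (Complex.nonneg_iff.mp h2).1
  rw [Matrix.trace, Complex.re_sum]
  exact Finset.sum_nonneg fun i _ => h i

lemma posDef_conj {M N : Matrix n n ℂ} (hM : M.PosDef) (hN : IsUnit N) :
    (Nᴴ * M * N).PosDef := by
  obtain ⟨_i⟩ := hN.nonempty_invertible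
  refine .of_dotProduct_mulVec_pos (Matrix.isHermitian_conjTranspose_mul_mul N hM.1) fun x hx => ?_
  have hx' : N *ᵥ x ≠ 0 := by
    intro hcon
    apply hx
    have := congrArg (fun v => (⅟N) *ᵥ v) hcon
    simpa [Matrix.mulVec_mulVec] using this
  simpa only [star_mulVec, dotProduct_mulVec, vecMul_vecMul] using hM.dotProduct_mulVec_pos hx'

lemma scalar_key {p t : ℝ} (hp0 : 0 < p) (hp1 : p ≤ 1/2) (ht : 0 < t) :
    0 ≤ t ^ p + (1 - 2*p) * t - (2 - 2*p) * t ^ (1/2 : ℝ) := by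
  have hw : (0:ℝ) < 2 - 2*p := by linarith
  have hne : (2 - 2*p : ℝ) ≠ 0 := hw.ne'
  have h := Real.geom_mean_le_arith_mean2_weighted
    (w₁ := 1/(2-2*p)) (w₂ := (1-2*p)/(2-2*p)) (p₁ := t ^ p) (p₂ := t)
    (by positivity) (div_nonneg (by linarith) hw.le)
    (Real.rpow_nonneg ht.le p) ht.le (by rw [← add_div, div_eq_one_iff_eq hne]; ring)
  have hg : (t ^ p) ^ (1/(2-2*p)) * t ^ ((1-2*p)/(2-2*p)) = t ^ (1/2 : ℝ) := by
    rw [← Real.rpow_mul ht.le, ← Real.rpow_add ht]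
    congr 1
    rw [mul_one_div, ← add_div, div_eq_iff hne]; ring
  rw [hg] at h
  have h2 := mul_le_mul_of_nonneg_left h hw.le
  have e1 : (2-2*p) * (1/(2-2*p) * t^p + (1-2*p)/(2-2*p) * t) = t^p + (1-2*p)*t := by
    rw [mul_add, ← mul_assoc, mul_one_div_cancel hne, one_mul, ← mul_assoc, mul_div_cancel₀ _ hne]
  linarith [h2, e1.le, e1.ge]

end Aux

theorem stmt19 {n : Type*} [Fintype n] [DecidableEq n] {A B : Matrix n n ℂ}
    (hA : A.PosDef) (hB : B.PosDef)
    (hTrA : (A.trace).re = 1) (hTrB : (B.trace).re = 1)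
    {p : ℝ} (hp0 : 0 < p) (hp1 : p ≤ 1 / 2) :
    (1 - p) * ((TsallisEntropy A B (1 / 2)).trace).re
        + (2 * p - 1) * (((B - A).trace).re)
      ≤ p * ((TsallisEntropy A B p).trace).re := by
  set sA := mrpow A (1/2) with hsA
  set sAi := mrpow A (-(1/2)) with hsAi
  set C := sAi * B * sAi with hCdef
  have hsAsAi : sA * sAi = 1 := by
    rw [hsA, hsAi, mrpow_mul_mrpow_s19 hA]
    have : (1/2 + -(1/2) : ℝ) = 0 := by norm_num
    rw [this, mrpow_zero hA]
  have hsAisA : sAi * sA = 1 := by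
    rw [hsA, hsAi, mrpow_mul_mrpow_s19 hA]
    have : (-(1/2) + 1/2 : ℝ) = 0 := by norm_num
    rw [this, mrpow_zero hA]
  have hsq : sA * sA = A := by
    rw [hsA, mrpow_mul_mrpow_s19 hA]
    have : (1/2 + 1/2 : ℝ) = 1 := by norm_num
    rw [this, mrpow_one hA]
  have hsAh : sAᴴ = sA := mrpow_isHermitian A (1/2)
  have hsAih : sAiᴴ = sAi := mrpow_isHermitian A (-(1/2))
  have hUnit : IsUnit sAi := ⟨⟨sAi, sA, hsAisA, hsAsAi⟩, rfl⟩
  have hCpd : C.PosDef := by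
    have := posDef_conj hB hUnit
    rwa [hsAih, ← hCdef] at this
  have hnatu : ∀ r, natu A B r = sA * mrpow C r * sA := fun r => rfl
  have hB' : sA * C * sA = B := by
    calc sA * (sAi * B * sAi) * sA = (sA * sAi) * B * (sAi * sA) := by
          simp only [mul_assoc]
      _ = B := by rw [hsAsAi, hsAisA, one_mul, mul_one]
  set f : ℝ → ℝ := fun t => t ^ p + (1 - 2*p) • t - (2 - 2*p) • t ^ (1/2 : ℝ) with hf
  have hD : cfc f C = mrpow C p + (1 - 2*p) • C - (2 - 2*p) • mrpow C (1/2) := by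
    rw [hf]
    rw [cfc_sub (a := C) (f := fun t : ℝ => t ^ p + (1 - 2*p) • t)
        (g := fun t : ℝ => (2 - 2*p) • t ^ (1/2 : ℝ)) (contOn _ C) (contOn _ C),
      cfc_add (a := C) (f := fun t : ℝ => t ^ p) (g := fun t : ℝ => (1 - 2*p) • t)
        (contOn _ C) (contOn _ C),
      cfc_smul (s := (1 - 2*p : ℝ)) (f := fun t : ℝ => t) (a := C) (contOn _ C),
      cfc_smul (s := (2 - 2*p : ℝ)) (f := fun t : ℝ => t ^ (1/2 : ℝ)) (a := C) (contOn _ C),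
      ]
    exact congrArg (fun X => mrpow C p + (1 - 2*p) • X - (2 - 2*p) • mrpow C (1/2))
      (cfc_id' ℝ C hCpd.1)
  have hfnn : ∀ i, 0 ≤ f (hCpd.1.eigenvalues i) := by
    intro i
    have ht : 0 < hCpd.1.eigenvalues i := hCpd.eigenvalues_pos i
    simpa [hf, smul_eq_mul] using scalar_key hp0 hp1 ht
  have hDpsd : (cfc f C).PosSemidef := cfc_posSemidef hCpd.1 hfnn
  have hE : (sA * cfc f C * sA).PosSemidef := by
    have := hDpsd.mul_mul_conjTranspose_same sA
    rwa [hsAh] at this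
  have hEeq : sA * cfc f C * sA
      = natu A B p + (1 - 2*p) • B - (2 - 2*p) • natu A B (1/2) := by
    rw [hD, hnatu p, hnatu (1/2), ← hB']
    simp only [mul_add, add_mul, mul_sub, sub_mul, Matrix.mul_smul, Matrix.smul_mul, mul_assoc]
  have htr := trace_re_nonneg' hE
  rw [hEeq, trace_sub, trace_add, trace_smul, trace_smul] at htr
  have key : 0 ≤ ((natu A B p).trace).re + (1 - 2*p) * B.trace.re
      - (2 - 2*p) * ((natu A B (1/2)).trace).re := by
    simpa [Complex.sub_re, Complex.add_re, Complex.smul_re, smul_eq_mul] using htr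
  have hTp : ((TsallisEntropy A B p).trace).re
      = (1/p) * (((natu A B p).trace).re - 1) := by
    rw [TsallisEntropy, trace_smul, trace_sub]
    simp [Complex.smul_re, Complex.sub_re, hTrA, smul_eq_mul]
  have hTh : ((TsallisEntropy A B (1/2)).trace).re
      = 2 * (((natu A B (1/2)).trace).re - 1) := by
    rw [TsallisEntropy, trace_smul, trace_sub]
    simp [Complex.smul_re, Complex.sub_re, hTrA, smul_eq_mul]
  have hBA : (((B - A).trace).re) = 0 := by
    rw [trace_sub]
    simp [Complex.sub_re, hTrA, hTrB]
  rw [hTp, hTh, hBA, hTrB] at *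
  have hcancel : p * ((1/p) * (((natu A B p).trace).re - 1))
      = ((natu A B p).trace).re - 1 := by
    field_simp
  rw [hcancel]
  nlinarith [key]
end
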